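/- Let n ≥ 1 and 0 < t ≤ 1. Then φ_0(t) := C_n (sinh t)^{1-n} ∫_{-t}^{t} (cosh t − cosh s)^{n/2−1} ds is bounded above and below by positive constants depending only on n (uniformly in t ∈ (0,1]). -/

import Mathlib

open Real MeasureTheory intervalIntegral

/-- The constant `C_n = 2^{n/2-1} Γ((n+1)/2) / (√π Γ(n/2))`. -/
noncomputable def Cconst (n : ℕ) : ℝ :=
  2 ^ ((n : ℝ) / 2 - 1) * Real.Gamma ((n + 1) / 2) / (Real.sqrt Real.pi * Real.Gamma (n / 2))

lemma my_cosh_sub_cosh (t s : ℝ) :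
    Real.cosh t - Real.cosh s = 2 * Real.sinh ((t+s)/2) * Real.sinh ((t-s)/2) := by
  have h1 := Real.cosh_add ((t+s)/2) ((t-s)/2)
  have h2 := Real.cosh_sub ((t+s)/2) ((t-s)/2)
  have e1 : (t+s)/2 + (t-s)/2 = t := by ring
  have e2 : (t+s)/2 - (t-s)/2 = s := by ring
  rw [e1] at h1; rw [e2] at h2
  linear_combination h1 - h2

lemma my_sinh_le (x : ℝ) (h0 : 0 ≤ x) (h1 : x ≤ 1) : Real.sinh x ≤ Real.exp 1 * x := by
  have hE : -(2*x) + 1 ≤ Real.exp (-(2*x)) := Real.add_one_le_exp _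
  have hab : Real.exp x * Real.exp (-x) = 1 := by
    rw [← Real.exp_add]; simp
  have hsq : Real.exp (-(2*x)) = Real.exp (-x) * Real.exp (-x) := by
    rw [← Real.exp_add]; ring_nf
  have hax : Real.exp x ≤ Real.exp 1 := Real.exp_le_exp.mpr h1
  have ha : 0 < Real.exp x := Real.exp_pos x
  have hb : 0 < Real.exp (-x) := Real.exp_pos (-x)
  rw [Real.sinh_eq]
  nlinarith [mul_le_mul_of_nonneg_left (hsq ▸ hE) ha.le, mul_le_mul_of_nonneg_left hax h0]

lemma cosh_bounds {t s : ℝ} (ht : 0 < t) (ht1 : t ≤ 1) (hs : -t ≤ s) (hst : s ≤ t) :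
    (t+s)*(t-s)/2 ≤ Real.cosh t - Real.cosh s ∧
      Real.cosh t - Real.cosh s ≤ Real.exp 1 ^ 2 * ((t+s)*(t-s)/2) := by
  have hu0 : 0 ≤ (t+s)/2 := by linarith
  have hv0 : 0 ≤ (t-s)/2 := by linarith
  have hu1 : (t+s)/2 ≤ 1 := by linarith
  have hv1 : (t-s)/2 ≤ 1 := by linarith
  have h1 : (t+s)/2 ≤ Real.sinh ((t+s)/2) := Real.self_le_sinh_iff.mpr hu0
  have h3 : (t-s)/2 ≤ Real.sinh ((t-s)/2) := Real.self_le_sinh_iff.mpr hv0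
  have h2 : Real.sinh ((t+s)/2) ≤ Real.exp 1 * ((t+s)/2) := my_sinh_le _ hu0 hu1
  have h4 : Real.sinh ((t-s)/2) ≤ Real.exp 1 * ((t-s)/2) := my_sinh_le _ hv0 hv1
  have huv : (t+s)/2 * ((t-s)/2) ≤ Real.sinh ((t+s)/2) * Real.sinh ((t-s)/2) :=
    mul_le_mul h1 h3 hv0 (hu0.trans h1)
  have huv2 : Real.sinh ((t+s)/2) * Real.sinh ((t-s)/2)
      ≤ (Real.exp 1 * ((t+s)/2)) * (Real.exp 1 * ((t-s)/2)) :=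
    mul_le_mul h2 h4 (hv0.trans h3) (by positivity)
  rw [my_cosh_sub_cosh t s]
  constructor
  · nlinarith [huv]
  · nlinarith [huv2]


lemma Cconst_pos (n : ℕ) (hn : 1 ≤ n) : 0 < Cconst n := by
  have hn' : (0:ℝ) < n := by exact_mod_cast hn
  unfold Cconst
  apply div_pos
  · exact mul_pos (Real.rpow_pos_of_pos two_pos _)
      (Real.Gamma_pos_of_pos (by positivity))
  · exact mul_pos (Real.sqrt_pos.mpr Real.pi_pos)
      (Real.Gamma_pos_of_pos (by positivity))

lemma tpow_collapse {t : ℝ} (ht : 0 < t) (a b : ℝ) (h : a + b + 1 = 0) :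
    t ^ a * (t ^ b * t) = 1 := by
  rw [← Real.rpow_add_one (ne_of_gt ht) b, ← Real.rpow_add ht,
    show a + (b+1) = 0 by linarith, Real.rpow_zero]

lemma case_two (n : ℕ) (hn2 : 2 ≤ n) {t : ℝ} (ht : 0 < t) (ht1 : t ≤ 1) :
    Cconst n * (Real.exp 1 ^ ((1:ℝ) - n) * (3/8 : ℝ) ^ ((n:ℝ)/2 - 1))
      ≤ Cconst n * Real.sinh t ^ ((1 : ℝ) - n) *
          ∫ s in (-t)..t, (Real.cosh t - Real.cosh s) ^ ((n : ℝ) / 2 - 1) ∧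
    Cconst n * Real.sinh t ^ ((1 : ℝ) - n) *
          (∫ s in (-t)..t, (Real.cosh t - Real.cosh s) ^ ((n : ℝ) / 2 - 1))
      ≤ Cconst n * (2 * (Real.exp 1 ^ 2 / 2) ^ ((n:ℝ)/2 - 1)) := by
  set p : ℝ := (n:ℝ)/2 - 1 with hp_def
  have hn2' : (2:ℝ) ≤ (n:ℝ) := by exact_mod_cast hn2
  have hp : 0 ≤ p := by rw [hp_def]; linarith
  have h1n : (1:ℝ) - n ≤ 0 := by linarith
  have hC := Cconst_pos n (by omega)
  have hcont : Continuous fun s => (Real.cosh t - Real.cosh s) ^ p :=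
    (continuous_const.sub Real.continuous_cosh).rpow_const fun x => Or.inr hp
  have hint : ∀ a b : ℝ,
      IntervalIntegrable (fun s => (Real.cosh t - Real.cosh s) ^ p) volume a b :=
    fun a b => hcont.intervalIntegrable a b
  have hbase : ∀ s, -t ≤ s → s ≤ t → 0 ≤ Real.cosh t - Real.cosh s := by
    intro s h1 h2
    have := (cosh_bounds ht ht1 h1 h2).1
    nlinarith
  have hub : ∀ s, -t ≤ s → s ≤ t →
      Real.cosh t - Real.cosh s ≤ Real.exp 1 ^ 2 * t ^ 2 / 2 := by
    intro s h1 h2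
    have := (cosh_bounds ht ht1 h1 h2).2
    nlinarith [sq_nonneg s, sq_nonneg (Real.exp 1)]
  have hfnn : ∀ s, -t ≤ s → s ≤ t → 0 ≤ (Real.cosh t - Real.cosh s) ^ p :=
    fun s h1 h2 => Real.rpow_nonneg (hbase s h1 h2) p
  have hI0 : 0 ≤ ∫ s in (-t)..t, (Real.cosh t - Real.cosh s) ^ p :=
    integral_nonneg (by linarith) (fun u hu => hfnn u hu.1 hu.2)
  have hSnn : 0 ≤ Real.sinh t ^ ((1:ℝ) - n) :=
    Real.rpow_nonneg (Real.sinh_nonneg_iff.mpr ht.le) _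
  have hsinh_pos : 0 < Real.sinh t := Real.sinh_pos_iff.mpr ht
  -- power collapse
  have hcol : t ^ ((1:ℝ)-n) * (t ^ (2*p) * t) = 1 :=
    tpow_collapse ht _ _ (by rw [hp_def]; ring)
  have ht2 : ((t^2 : ℝ)) ^ p = t ^ (2*p) := by
    rw [← Real.rpow_natCast t 2, ← Real.rpow_mul ht.le]
    norm_num
  -- upper bound
  have hIub : (∫ s in (-t)..t, (Real.cosh t - Real.cosh s) ^ p)
      ≤ (Real.exp 1 ^ 2 * t ^ 2 / 2) ^ p * (2*t) := by
    have h := integral_mono_on (by linarith : -t ≤ t) (hint _ _)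
      (intervalIntegrable_const (c := (Real.exp 1 ^ 2 * t ^ 2 / 2) ^ p))
      (fun s hs => Real.rpow_le_rpow (hbase s hs.1 hs.2) (hub s hs.1 hs.2) hp)
    rw [intervalIntegral.integral_const, smul_eq_mul] at h
    have : (t - -t) * ((Real.exp 1 ^ 2 * t ^ 2 / 2) ^ p)
        = (Real.exp 1 ^ 2 * t ^ 2 / 2) ^ p * (2*t) := by ring
    linarith
  -- lower bound
  have hIlb : ((3/8 : ℝ) * t ^ 2) ^ p * t
      ≤ ∫ s in (-t)..t, (Real.cosh t - Real.cosh s) ^ p := by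
    have hmid : ∀ s ∈ Set.Icc (-(t/2)) (t/2),
        ((3/8 : ℝ) * t ^ 2) ^ p ≤ (Real.cosh t - Real.cosh s) ^ p := by
      intro s hs
      obtain ⟨h1, h2⟩ := hs
      have hb := (cosh_bounds ht ht1 (by linarith) (by linarith)).1
      refine Real.rpow_le_rpow (by positivity) ?_ hp
      nlinarith [mul_nonneg (by linarith : (0:ℝ) ≤ t/2 - s) (by linarith : (0:ℝ) ≤ t/2 + s)]
    have e1 := integral_add_adjacent_intervals (hint (-t) (-(t/2))) (hint (-(t/2)) t)
    have e2 := integral_add_adjacent_intervals (hint (-(t/2)) (t/2)) (hint (t/2) t)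
    have n1 : 0 ≤ ∫ s in (-t)..(-(t/2)), (Real.cosh t - Real.cosh s) ^ p :=
      integral_nonneg (by linarith) (fun u hu => hfnn u hu.1 (by cases hu; linarith))
    have n2 : 0 ≤ ∫ s in (t/2)..t, (Real.cosh t - Real.cosh s) ^ p :=
      integral_nonneg (by linarith) (fun u hu => hfnn u (by cases hu; linarith) hu.2)
    have hmid' := integral_mono_on (by linarith : -(t/2) ≤ t/2)
      (intervalIntegrable_const (c := ((3/8 : ℝ) * t ^ 2) ^ p)) (hint _ _) hmid
    rw [intervalIntegral.integral_const, smul_eq_mul] at hmid'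
    have : (t/2 - -(t/2)) * (((3/8 : ℝ) * t ^ 2) ^ p) = ((3/8 : ℝ) * t ^ 2) ^ p * t := by ring
    linarith
  have hSub : Real.sinh t ^ ((1:ℝ)-n) ≤ t ^ ((1:ℝ)-n) :=
    Real.rpow_le_rpow_of_nonpos ht (Real.self_le_sinh_iff.mpr ht.le) h1n
  have hSlb : (Real.exp 1 * t) ^ ((1:ℝ)-n) ≤ Real.sinh t ^ ((1:ℝ)-n) :=
    Real.rpow_le_rpow_of_nonpos hsinh_pos (my_sinh_le t ht.le ht1) h1n
  constructor
  · -- lower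
    have key : (Real.exp 1 * t) ^ ((1:ℝ)-n) * (((3/8 : ℝ) * t ^ 2) ^ p * t)
        = Real.exp 1 ^ ((1:ℝ)-n) * (3/8 : ℝ) ^ p := by
      rw [Real.mul_rpow (Real.exp_pos 1).le ht.le,
        Real.mul_rpow (by norm_num) (by positivity), ht2]
      calc Real.exp 1 ^ ((1:ℝ)-n) * t ^ ((1:ℝ)-n) * ((3/8:ℝ) ^ p * t ^ (2*p) * t)
          = (Real.exp 1 ^ ((1:ℝ)-n) * (3/8:ℝ) ^ p) * (t ^ ((1:ℝ)-n) * (t ^ (2*p) * t)) := by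
            ring
        _ = Real.exp 1 ^ ((1:ℝ)-n) * (3/8:ℝ) ^ p := by rw [hcol, mul_one]
    calc Cconst n * (Real.exp 1 ^ ((1:ℝ)-n) * (3/8 : ℝ) ^ p)
        = Cconst n * ((Real.exp 1 * t) ^ ((1:ℝ)-n) * (((3/8 : ℝ) * t ^ 2) ^ p * t)) := by
          rw [key]
      _ ≤ Cconst n * (Real.sinh t ^ ((1:ℝ)-n) * (((3/8 : ℝ) * t ^ 2) ^ p * t)) := by
          apply mul_le_mul_of_nonneg_left (mul_le_mul_of_nonneg_right hSlb (by positivity)) hC.le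
      _ ≤ Cconst n * (Real.sinh t ^ ((1:ℝ)-n) *
            ∫ s in (-t)..t, (Real.cosh t - Real.cosh s) ^ p) := by
          apply mul_le_mul_of_nonneg_left (mul_le_mul_of_nonneg_left hIlb hSnn) hC.le
      _ = Cconst n * Real.sinh t ^ ((1:ℝ)-n) *
            ∫ s in (-t)..t, (Real.cosh t - Real.cosh s) ^ p := by ring
  · -- upper
    have keyU : t ^ ((1:ℝ)-n) * ((Real.exp 1 ^ 2 * t ^ 2 / 2) ^ p * (2*t))
        = 2 * (Real.exp 1 ^ 2 / 2) ^ p := by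
      rw [show Real.exp 1 ^ 2 * t ^ 2 / 2 = (Real.exp 1 ^ 2 / 2) * t ^ 2 by ring,
        Real.mul_rpow (by positivity) (by positivity), ht2]
      calc t ^ ((1:ℝ)-n) * ((Real.exp 1 ^ 2 / 2) ^ p * t ^ (2*p) * (2*t))
          = (2 * (Real.exp 1 ^ 2 / 2) ^ p) * (t ^ ((1:ℝ)-n) * (t ^ (2*p) * t)) := by ring
        _ = 2 * (Real.exp 1 ^ 2 / 2) ^ p := by rw [hcol, mul_one]
    calc Cconst n * Real.sinh t ^ ((1:ℝ)-n) *
          (∫ s in (-t)..t, (Real.cosh t - Real.cosh s) ^ p)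
        ≤ Cconst n * Real.sinh t ^ ((1:ℝ)-n) *
            ((Real.exp 1 ^ 2 * t ^ 2 / 2) ^ p * (2*t)) := by
          apply mul_le_mul_of_nonneg_left hIub (mul_nonneg hC.le hSnn)
      _ ≤ Cconst n * t ^ ((1:ℝ)-n) * ((Real.exp 1 ^ 2 * t ^ 2 / 2) ^ p * (2*t)) := by
          apply mul_le_mul_of_nonneg_right (mul_le_mul_of_nonneg_left hSub hC.le) (by positivity)
      _ = Cconst n * (2 * (Real.exp 1 ^ 2 / 2) ^ p) := by
          rw [mul_assoc, keyU]


lemma case_one {t : ℝ} (ht : 0 < t) (ht1 : t ≤ 1) :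
    (Real.exp 1 ^ 2 / 2) ^ (-(1/2) : ℝ)
      ≤ (∫ s in (-t)..t, (Real.cosh t - Real.cosh s) ^ (-(1/2) : ℝ)) ∧
    (∫ s in (-t)..t, (Real.cosh t - Real.cosh s) ^ (-(1/2) : ℝ)) ≤ 8 := by
  have hq : (-1:ℝ) < -(1/2) := by norm_num
  have hbase : ∀ s, -t ≤ s → s ≤ t → 0 ≤ Real.cosh t - Real.cosh s := by
    intro s h1 h2
    have := (cosh_bounds ht ht1 h1 h2).1
    nlinarith
  have hfnn : ∀ s, -t ≤ s → s ≤ t → 0 ≤ (Real.cosh t - Real.cosh s) ^ (-(1/2) : ℝ) :=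
    fun s h1 h2 => Real.rpow_nonneg (hbase s h1 h2) _
  -- integrability of the comparison function on [0, t]
  have hrefl : IntervalIntegrable (fun s : ℝ => (t - s) ^ (-(1/2):ℝ)) volume 0 t := by
    have h := (intervalIntegrable_rpow' hq (a := 0) (b := t)).comp_sub_left t
    simpa using h.symm
  have hg_int : IntervalIntegrable
      (fun s : ℝ => (t/2) ^ (-(1/2):ℝ) * (t - s) ^ (-(1/2):ℝ)) volume 0 t :=
    hrefl.const_mul _
  -- pointwise bound on [0, t]
  have hfg : ∀ s ∈ Set.Icc (0:ℝ) t, (Real.cosh t - Real.cosh s) ^ (-(1/2) : ℝ)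
      ≤ (t/2) ^ (-(1/2):ℝ) * (t - s) ^ (-(1/2):ℝ) := by
    intro s hs
    obtain ⟨h0s, hst⟩ := hs
    rcases eq_or_lt_of_le hst with h | hlt
    · subst h
      simp [Real.zero_rpow (by norm_num : (-(1/2):ℝ) ≠ 0)]
    · have hb := (cosh_bounds ht ht1 (by linarith) hlt.le).1
      have hpos : 0 < (t/2) * (t - s) := by
        apply mul_pos (by linarith) (by linarith)
      have hle : (t/2) * (t - s) ≤ Real.cosh t - Real.cosh s := by nlinarith
      calc (Real.cosh t - Real.cosh s) ^ (-(1/2) : ℝ)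
          ≤ ((t/2) * (t - s)) ^ (-(1/2) : ℝ) :=
            Real.rpow_le_rpow_of_nonpos hpos hle (by norm_num)
        _ = (t/2) ^ (-(1/2):ℝ) * (t - s) ^ (-(1/2):ℝ) :=
            Real.mul_rpow (by linarith) (by linarith)
  -- a.e. strong measurability on (0, t]
  have hposIoo : ∀ x ∈ Set.Ioo (-t) t, 0 < Real.cosh t - Real.cosh x := by
    intro x hx
    have := (cosh_bounds ht ht1 hx.1.le hx.2.le).1
    nlinarith [hx.1, hx.2]
  have hcon : ContinuousOn (fun s => (Real.cosh t - Real.cosh s) ^ (-(1/2) : ℝ))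
      (Set.Ioo (-t) t) :=
    ContinuousOn.rpow_const ((continuous_const.sub Real.continuous_cosh).continuousOn)
      (fun x hx => Or.inl (ne_of_gt (hposIoo x hx)))
  have hmeas : AEStronglyMeasurable (fun s => (Real.cosh t - Real.cosh s) ^ (-(1/2) : ℝ))
      (volume.restrict (Set.uIoc 0 t)) := by
    rw [Set.uIoc_of_le ht.le, ← Measure.restrict_congr_set MeasureTheory.Ioo_ae_eq_Ioc]
    exact (hcon.mono (Set.Ioo_subset_Ioo (by linarith) le_rfl)).aestronglyMeasurable
      measurableSet_Ioo
  -- integrability on [0, t]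
  have hf_int0t : IntervalIntegrable
      (fun s => (Real.cosh t - Real.cosh s) ^ (-(1/2) : ℝ)) volume 0 t := by
    refine hg_int.mono_fun' hmeas ?_
    filter_upwards [ae_restrict_mem measurableSet_uIoc] with s hs
    rw [Set.uIoc_of_le ht.le] at hs
    have h1 : -t ≤ s := by cases hs; linarith
    rw [Real.norm_eq_abs, abs_of_nonneg (hfnn s h1 hs.2)]
    exact hfg s ⟨hs.1.le, hs.2⟩
  -- upper bound on [0, t]
  have hI0t_ub : (∫ s in (0:ℝ)..t, (Real.cosh t - Real.cosh s) ^ (-(1/2) : ℝ)) ≤ 4 := by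
    have h1 := integral_mono_on ht.le hf_int0t hg_int hfg
    have h2 : (∫ s in (0:ℝ)..t, (t/2) ^ (-(1/2):ℝ) * (t - s) ^ (-(1/2):ℝ))
        = (t/2) ^ (-(1/2):ℝ) * ∫ s in (0:ℝ)..t, (t - s) ^ (-(1/2):ℝ) :=
      intervalIntegral.integral_const_mul _ _
    have h3 : (∫ s in (0:ℝ)..t, (t - s) ^ (-(1/2):ℝ))
        = ∫ x in (0:ℝ)..t, x ^ (-(1/2):ℝ) := by
      have h := intervalIntegral.integral_comp_sub_left (a := 0) (b := t)
        (fun x : ℝ => x ^ (-(1/2):ℝ)) t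
      simpa using h
    have h4 : (∫ x in (0:ℝ)..t, x ^ (-(1/2):ℝ)) = t ^ ((1/2):ℝ) * 2 := by
      rw [integral_rpow (Or.inl hq)]
      norm_num
      ring
    have ht2 : (0:ℝ) < t/2 := by linarith
    have h5 : (t/2:ℝ) ^ (-(1/2):ℝ) * t ^ ((1/2):ℝ) = 2 ^ ((1/2):ℝ) := by
      have hts : t ^ ((1/2):ℝ) = 2 ^ ((1/2):ℝ) * (t/2) ^ ((1/2):ℝ) := by
        rw [← Real.mul_rpow (by norm_num) ht2.le, show (2:ℝ) * (t/2) = t by ring]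
      calc (t/2:ℝ) ^ (-(1/2):ℝ) * t ^ ((1/2):ℝ)
          = 2 ^ ((1/2):ℝ) * ((t/2) ^ (-(1/2):ℝ) * (t/2) ^ ((1/2):ℝ)) := by rw [hts]; ring
        _ = 2 ^ ((1/2):ℝ) := by rw [← Real.rpow_add ht2]; norm_num
    have h6 : (2:ℝ) ^ ((1/2):ℝ) ≤ 2 := by
      calc (2:ℝ) ^ ((1/2):ℝ) ≤ 2 ^ (1:ℝ) :=
            Real.rpow_le_rpow_of_exponent_le one_le_two (by norm_num)
        _ = 2 := Real.rpow_one 2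
    have h7 : (t/2:ℝ) ^ (-(1/2):ℝ) * (t ^ ((1/2):ℝ) * 2) = 2 * (2:ℝ) ^ ((1/2):ℝ) := by
      rw [← h5]; ring
    rw [h2, h3, h4] at h1
    linarith
  -- symmetry
  have hf_int_neg : IntervalIntegrable
      (fun s => (Real.cosh t - Real.cosh s) ^ (-(1/2) : ℝ)) volume (-t) 0 := by
    have h := (IntervalIntegrable.iff_comp_neg).mp hf_int0t
    simp only [Real.cosh_neg, neg_zero] at h
    exact h.symm
  have hI_neg_eq : (∫ s in (0:ℝ)..t, (Real.cosh t - Real.cosh s) ^ (-(1/2) : ℝ))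
      = ∫ s in (-t)..(0:ℝ), (Real.cosh t - Real.cosh s) ^ (-(1/2) : ℝ) := by
    have h := intervalIntegral.integral_comp_neg (a := 0) (b := t)
      (fun s => (Real.cosh t - Real.cosh s) ^ (-(1/2) : ℝ))
    simpa [Real.cosh_neg] using h
  have hf_int : IntervalIntegrable
      (fun s => (Real.cosh t - Real.cosh s) ^ (-(1/2) : ℝ)) volume (-t) t :=
    hf_int_neg.trans hf_int0t
  have htot := integral_add_adjacent_intervals hf_int_neg hf_int0t
  constructor
  · -- lower bound
    have hmlb : ∀ s ∈ Set.Icc (-(t/2)) (t/2),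
        (Real.exp 1 ^ 2 / 2 * t ^ 2) ^ (-(1/2):ℝ)
          ≤ (Real.cosh t - Real.cosh s) ^ (-(1/2) : ℝ) := by
      intro s hs
      obtain ⟨h1, h2⟩ := hs
      have hb1 := (cosh_bounds (s := s) ht ht1 (by linarith) (by linarith)).1
      have hb2 := (cosh_bounds (s := s) ht ht1 (by linarith) (by linarith)).2
      refine Real.rpow_le_rpow_of_nonpos ?_ ?_ (by norm_num)
      · nlinarith
      · nlinarith [sq_nonneg s, sq_nonneg (Real.exp 1)]
    have hsub_int : IntervalIntegrable
        (fun s => (Real.cosh t - Real.cosh s) ^ (-(1/2) : ℝ)) volume (-(t/2)) (t/2) :=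
      hf_int.mono_set (by
        rw [Set.uIcc_of_le (by linarith), Set.uIcc_of_le (by linarith)]
        exact Set.Icc_subset_Icc (by linarith) (by linarith))
    have hmid' := integral_mono_on (by linarith : -(t/2) ≤ t/2)
      (intervalIntegrable_const
        (c := (Real.exp 1 ^ 2 / 2 * t ^ 2) ^ (-(1/2):ℝ)))
      hsub_int hmlb
    rw [intervalIntegral.integral_const, smul_eq_mul] at hmid'
    have e1 := integral_add_adjacent_intervals
      (hf_int.mono_set (by
        rw [Set.uIcc_of_le (by linarith : -t ≤ -(t/2)), Set.uIcc_of_le (by linarith)]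
        exact Set.Icc_subset_Icc (by linarith) (by linarith)))
      (hf_int.mono_set (by
        rw [Set.uIcc_of_le (by linarith : -(t/2) ≤ t), Set.uIcc_of_le (by linarith)]
        exact Set.Icc_subset_Icc (by linarith) (by linarith)))
    have e2 := integral_add_adjacent_intervals hsub_int
      (hf_int.mono_set (by
        rw [Set.uIcc_of_le (by linarith : t/2 ≤ t), Set.uIcc_of_le (by linarith)]
        exact Set.Icc_subset_Icc (by linarith) (by linarith)))
    have n1 : 0 ≤ ∫ s in (-t)..(-(t/2)), (Real.cosh t - Real.cosh s) ^ (-(1/2) : ℝ) :=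
      integral_nonneg (by linarith) (fun u hu => hfnn u hu.1 (by cases hu; linarith))
    have n2 : 0 ≤ ∫ s in (t/2)..t, (Real.cosh t - Real.cosh s) ^ (-(1/2) : ℝ) :=
      integral_nonneg (by linarith) (fun u hu => hfnn u (by cases hu; linarith) hu.2)
    -- compute the constant
    have ht2q : ((t^2 : ℝ)) ^ (-(1/2):ℝ) = t⁻¹ := by
      rw [← Real.rpow_natCast t 2, ← Real.rpow_mul ht.le]
      norm_num [Real.rpow_neg_one]
    have hm : (t/2 - -(t/2)) * ((Real.exp 1 ^ 2 / 2 * t ^ 2) ^ (-(1/2):ℝ))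
        = (Real.exp 1 ^ 2 / 2) ^ (-(1/2):ℝ) := by
      rw [Real.mul_rpow (by positivity) (by positivity), ht2q]
      field_simp
      norm_num
    nlinarith [hmid', e1, e2, n1, n2, hm]
  · -- upper bound
    have h := hI0t_ub
    rw [hI_neg_eq] at h
    linarith [hI0t_ub, htot]


/-- For `n ≥ 1`, the quantity
`φ_0(t) = C_n (sinh t)^{1-n} ∫_{-t}^{t} (cosh t - cosh s)^{n/2-1} ds`
is bounded above and below by positive constants depending only on `n`,
uniformly in `t ∈ (0,1]`. -/
theorem stmt_17 (n : ℕ) (hn : 1 ≤ n) :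
    ∃ c C : ℝ, 0 < c ∧ 0 < C ∧ ∀ t : ℝ, 0 < t → t ≤ 1 →
      c ≤ Cconst n * Real.sinh t ^ ((1 : ℝ) - n) *
          ∫ s in (-t)..t, (Real.cosh t - Real.cosh s) ^ ((n : ℝ) / 2 - 1) ∧
      Cconst n * Real.sinh t ^ ((1 : ℝ) - n) *
          ∫ s in (-t)..t, (Real.cosh t - Real.cosh s) ^ ((n : ℝ) / 2 - 1) ≤ C := by
  obtain rfl | hn2 : n = 1 ∨ 2 ≤ n := by omega
  · have hC := Cconst_pos 1 le_rfl
    refine ⟨Cconst 1 * (Real.exp 1 ^ 2 / 2) ^ (-(1/2) : ℝ), Cconst 1 * 8,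
      mul_pos hC (Real.rpow_pos_of_pos (by positivity) _), by positivity, ?_⟩
    intro t ht ht1
    have h := case_one ht ht1
    have e0 : Real.sinh t ^ ((1:ℝ) - ((1:ℕ):ℝ)) = 1 := by
      rw [show ((1:ℝ) - ((1:ℕ):ℝ)) = 0 by norm_num, Real.rpow_zero]
    have e1 : ((1:ℕ):ℝ)/2 - 1 = (-(1/2):ℝ) := by norm_num
    simp only [e1, e0, mul_one]
    exact ⟨mul_le_mul_of_nonneg_left h.1 hC.le, mul_le_mul_of_nonneg_left h.2 hC.le⟩
  · have hC := Cconst_pos n (by omega)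
    refine ⟨Cconst n * (Real.exp 1 ^ ((1:ℝ) - n) * (3/8 : ℝ) ^ ((n:ℝ)/2 - 1)),
      Cconst n * (2 * (Real.exp 1 ^ 2 / 2) ^ ((n:ℝ)/2 - 1)),
      mul_pos hC (mul_pos (Real.rpow_pos_of_pos (Real.exp_pos 1) _)
        (Real.rpow_pos_of_pos (by norm_num) _)),
      mul_pos hC (mul_pos two_pos (Real.rpow_pos_of_pos (by positivity) _)), ?_⟩
    intro t ht ht1
    exact case_two n hn2 ht ht1
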